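/- Dyadic martingale John–Nirenberg inequality: there exist absolute constants c, C > 0 such that for every locally finite Borel measure μ, every f with ‖f‖_{BMO(μ)} < ∞, and every dyadic cube Q with 0 < μ(Q) < ∞, one has (1/μ(Q)) ∫_Q exp(c |f − ⟨f⟩_{Q̂}| / ‖f‖_{BMO(μ)}) dμ ≤ C, where Q̂ is the dyadic parent of Q. -/

import Mathlib

open MeasureTheory Set ENNReal

noncomputable section

/-- A dyadic cube in `ℝ^d`: side length `2^n`, lower-left corner `m * 2^n`. -/
structure DyadicCube (d : ℕ) where
  n : ℤ
  m : Fin d → ℤ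

namespace DyadicCube

/-- The underlying set of a dyadic cube. -/
def toSet {d : ℕ} (Q : DyadicCube d) : Set (Fin d → ℝ) :=
  {x | ∀ i, (Q.m i : ℝ) * 2 ^ Q.n ≤ x i ∧ x i < ((Q.m i : ℝ) + 1) * 2 ^ Q.n}

/-- The dyadic parent of a dyadic cube. -/
def parent {d : ℕ} (Q : DyadicCube d) : DyadicCube d :=
  ⟨Q.n + 1, fun i => Int.fdiv (Q.m i) 2⟩

/-- The `k`-th dyadic ancestor of a dyadic cube. -/
def ancestor {d : ℕ} (k : ℕ) (Q : DyadicCube d) : DyadicCube d :=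
  parent^[k] Q

end DyadicCube

/-- `m` is a median of `f` on `Q` (w.r.t. `μ`). -/
def IsMedian {d : ℕ} (μ : Measure (Fin d → ℝ)) (f : (Fin d → ℝ) → ℝ)
    (Q : Set (Fin d → ℝ)) (m : ℝ) : Prop :=
  μ (Q ∩ {x | m < f x}) ≤ μ Q / 2 ∧ μ (Q ∩ {x | f x < m}) ≤ μ Q / 2

/-- The relative median oscillation `r_λ(f; Q)` of `f` about zero on `Q`. -/
def rOsc {d : ℕ} (μ : Measure (Fin d → ℝ)) (lam : ℝ) (f : (Fin d → ℝ) → ℝ)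
    (Q : Set (Fin d → ℝ)) : ℝ :=
  sInf {r : ℝ | 0 ≤ r ∧ μ (Q ∩ {x | r < |f x|}) ≤ ENNReal.ofReal lam * μ Q}

/-- The median oscillation `ω_λ(f; Q)`. -/
def mOsc {d : ℕ} (μ : Measure (Fin d → ℝ)) (lam : ℝ) (f : (Fin d → ℝ) → ℝ)
    (Q : Set (Fin d → ℝ)) : ℝ :=
  ⨅ c : ℝ, rOsc μ lam (fun x => f x - c) Q

/-- The average `⟨f⟩_Q = (1/μ(Q)) ∫_Q f dμ`. -/
def avg {d : ℕ} (μ : Measure (Fin d → ℝ)) (f : (Fin d → ℝ) → ℝ)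
    (Q : Set (Fin d → ℝ)) : ℝ :=
  (∫ x in Q, f x ∂μ) / (μ Q).toReal

/-- The dyadic martingale BMO norm of `f`. -/
def bmoNorm {d : ℕ} (μ : Measure (Fin d → ℝ)) (f : (Fin d → ℝ) → ℝ) : ℝ :=
  sSup {t : ℝ | ∃ Q : DyadicCube d, 0 < μ Q.toSet ∧
    t = (∫ x in Q.toSet, |f x - avg μ f Q.parent.toSet| ∂μ) / (μ Q.toSet).toReal}


namespace DyadicCube

variable {d : ℕ}

instance : Countable (DyadicCube d) := by
  have : Function.Injective (fun Q : DyadicCube d => (Q.n, Q.m)) := by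
    intro ⟨a,b⟩ ⟨c,e⟩ h; simpa using h
  exact this.countable

lemma two_zpow_pos (n : ℤ) : (0:ℝ) < 2 ^ n := zpow_pos two_pos n

lemma mem_toSet_iff {Q : DyadicCube d} {x : Fin d → ℝ} :
    x ∈ Q.toSet ↔ ∀ i, ⌊x i / 2 ^ Q.n⌋ = Q.m i := by
  have h2 := two_zpow_pos Q.n
  constructor
  · intro hx i
    rw [Int.floor_eq_iff]
    constructor
    · rw [le_div_iff₀ h2]; exact (hx i).1
    · rw [div_lt_iff₀ h2]; exact (hx i).2
  · intro hx i
    have h := hx i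
    rw [Int.floor_eq_iff] at h
    constructor
    · rw [← le_div_iff₀ h2]; exact h.1
    · rw [← div_lt_iff₀ h2]; exact h.2

def cubeOf (n : ℤ) (x : Fin d → ℝ) : DyadicCube d := ⟨n, fun i => ⌊x i / 2 ^ n⌋⟩

@[simp] lemma cubeOf_n (n : ℤ) (x : Fin d → ℝ) : (cubeOf n x).n = n := rfl

lemma mem_cubeOf (n : ℤ) (x : Fin d → ℝ) : x ∈ (cubeOf n x).toSet := by
  rw [mem_toSet_iff]; intro i; rfl

lemma eq_cubeOf_of_mem {Q : DyadicCube d} {x : Fin d → ℝ} (hx : x ∈ Q.toSet) :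
    Q = cubeOf Q.n x := by
  rw [mem_toSet_iff] at hx
  cases Q with
  | mk n m => simp only [cubeOf, mk.injEq]; exact ⟨trivial, funext fun i => (hx i).symm⟩

lemma fdiv_floor (r : ℝ) : (Int.fdiv ⌊r⌋ 2) = ⌊r / 2⌋ := by
  rw [Int.fdiv_eq_ediv_of_nonneg _ (by norm_num)]
  set q := ⌊r⌋ / 2 with hq
  have hmod : ⌊r⌋ % 2 = 0 ∨ ⌊r⌋ % 2 = 1 := Int.emod_two_eq_zero_or_one _
  have hdm : 2 * q + ⌊r⌋ % 2 = ⌊r⌋ := by rw [hq]; omega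
  symm
  rw [Int.floor_eq_iff]
  have h1 : ((2*q : ℤ) : ℝ) ≤ ⌊r⌋ := by
    have : 2*q ≤ ⌊r⌋ := by omega
    exact_mod_cast this
  have h2 : (⌊r⌋ : ℝ) ≤ 2*q+1 := by
    have : ⌊r⌋ ≤ 2*q+1 := by omega
    exact_mod_cast this
  constructor
  · have := Int.floor_le r
    push_cast at h1 ⊢
    linarith
  · have := Int.lt_floor_add_one r
    push_cast at h2 ⊢
    linarith

lemma parent_cubeOf (n : ℤ) (x : Fin d → ℝ) :
    (cubeOf n x).parent = cubeOf (n+1) x := by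
  simp only [parent, cubeOf, mk.injEq, cubeOf_n]
  refine ⟨trivial, funext fun i => ?_⟩
  rw [fdiv_floor]
  congr 1
  rw [zpow_add_one₀ (two_ne_zero), ← div_div]

lemma subset_parent (Q : DyadicCube d) : Q.toSet ⊆ Q.parent.toSet := by
  intro x hx
  have h2 := two_zpow_pos Q.n
  intro i
  have h := hx i
  have hdm : 2 * Int.fdiv (Q.m i) 2 + Int.fmod (Q.m i) 2 = Q.m i := by
    have := Int.fmod_add_fdiv_mul (Q.m i) 2; linarith
  have hm0 : 0 ≤ Int.fmod (Q.m i) 2 := Int.fmod_nonneg_of_pos _ (by norm_num)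
  have hm1 : Int.fmod (Q.m i) 2 < 2 := Int.fmod_lt_of_pos _ (by norm_num)
  set M := Int.fdiv (Q.m i) 2 with hM
  have hle : 2*M ≤ Q.m i := by omega
  have hge : Q.m i ≤ 2*M + 1 := by omega
  have hle' : (2*M : ℝ) ≤ Q.m i := by exact_mod_cast hle
  have hge' : (Q.m i : ℝ) ≤ 2*M+1 := by exact_mod_cast hge
  have hz : (2:ℝ) ^ (Q.n + 1) = 2^Q.n * 2 := zpow_add_one₀ two_ne_zero Q.n
  constructor
  · show (M:ℝ) * 2^(Q.n+1) ≤ x i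
    rw [hz]
    nlinarith [h.1]
  · show x i < ((M:ℝ)+1) * 2^(Q.n+1)
    rw [hz]
    nlinarith [h.2]

@[simp] lemma parent_n (Q : DyadicCube d) : Q.parent.n = Q.n + 1 := rfl

/-- monotone chain of cubes containing x -/
lemma cubeOf_subset_cubeOf {x : Fin d → ℝ} {k l : ℤ} (h : k ≤ l) :
    (cubeOf k x).toSet ⊆ (cubeOf l x).toSet := by
  have key : ∀ j : ℕ, (cubeOf k x).toSet ⊆ (cubeOf (k + j) x).toSet := by
    intro j
    induction j with
    | zero => simp
    | succ j ih =>
        refine ih.trans ?_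
        have : (k + j) + 1 = k + (j+1 : ℕ) := by push_cast; ring
        rw [← this, ← parent_cubeOf]
        exact subset_parent _
  have hl : l = k + ((l - k).toNat : ℤ) := by omega
  rw [hl]
  exact key _

/-- trichotomy: if cubes share a point and P has smaller generation, P ⊆ Q -/
lemma toSet_subset_of_mem_of_le {P Q : DyadicCube d} {x : Fin d → ℝ}
    (hP : x ∈ P.toSet) (hQ : x ∈ Q.toSet) (h : P.n ≤ Q.n) : P.toSet ⊆ Q.toSet := by
  rw [eq_cubeOf_of_mem hP, eq_cubeOf_of_mem hQ]
  exact cubeOf_subset_cubeOf h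

def corner (Q : DyadicCube d) : Fin d → ℝ := fun i => (Q.m i : ℝ) * 2 ^ Q.n

lemma corner_mem (Q : DyadicCube d) : Q.corner ∈ Q.toSet := by
  intro i
  have h2 := two_zpow_pos Q.n
  simp only [corner]
  exact ⟨le_refl _, by nlinarith⟩

lemma toSet_nonempty (Q : DyadicCube d) : Q.toSet.Nonempty := ⟨Q.corner, Q.corner_mem⟩

/-- a point of the parent not in Q (needs d > 0) -/
lemma exists_mem_parent_not_mem (hd : 0 < d) (Q : DyadicCube d) :
    ∃ y, y ∈ Q.parent.toSet ∧ y ∉ Q.toSet := by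
  classical
  set i₀ : Fin d := ⟨0, hd⟩
  have h2 := two_zpow_pos Q.n
  have hz : (2:ℝ) ^ (Q.n + 1) = 2^Q.n * 2 := zpow_add_one₀ two_ne_zero Q.n
  set M := Int.fdiv (Q.m i₀) 2 with hM
  have hdm : 2 * Int.fdiv (Q.m i₀) 2 + Int.fmod (Q.m i₀) 2 = Q.m i₀ := by
    have := Int.fmod_add_fdiv_mul (Q.m i₀) 2; linarith
  have hm0 : 0 ≤ Int.fmod (Q.m i₀) 2 := Int.fmod_nonneg_of_pos _ (by norm_num)
  have hm1 : Int.fmod (Q.m i₀) 2 < 2 := Int.fmod_lt_of_pos _ (by norm_num)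
  -- parent membership of corner coordinates
  have hcor := subset_parent Q (corner_mem Q)
  by_cases hpar : Q.m i₀ = 2*M
  · -- take t = (m+1) * 2^n
    refine ⟨Function.update Q.corner i₀ (((Q.m i₀ : ℝ)+1) * 2^Q.n), ?_, ?_⟩
    · intro i
      by_cases hi : i = i₀
      · subst hi
        rw [Function.update_self]
        have hMr : (Q.m i₀ : ℝ) = 2*(M:ℝ) := by exact_mod_cast hpar
        constructor
        · show (M:ℝ) * 2^(Q.n+1) ≤ _
          rw [hz]; nlinarith
        · show _ < ((M:ℝ)+1) * 2^(Q.n+1)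
          rw [hz]; nlinarith
      · rw [Function.update_of_ne hi]
        exact hcor i
    · intro hmem
      have := (hmem i₀).2
      rw [Function.update_self] at this
      linarith
  · -- m = 2M+1, take t = m*2^n - 2^n
    have hodd : Q.m i₀ = 2*M + 1 := by omega
    refine ⟨Function.update Q.corner i₀ ((Q.m i₀ : ℝ) * 2^Q.n - 2^Q.n), ?_, ?_⟩
    · intro i
      by_cases hi : i = i₀
      · subst hi
        rw [Function.update_self]
        have hMr : (Q.m i₀ : ℝ) = 2*(M:ℝ)+1 := by exact_mod_cast hodd
        constructor
        · show (M:ℝ) * 2^(Q.n+1) ≤ _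
          rw [hz]; nlinarith
        · show _ < ((M:ℝ)+1) * 2^(Q.n+1)
          rw [hz]; nlinarith
      · rw [Function.update_of_ne hi]
        exact hcor i
    · intro hmem
      have := (hmem i₀).1
      rw [Function.update_self] at this
      linarith

lemma toSet_ne_parent (hd : 0 < d) (Q : DyadicCube d) : Q.toSet ≠ Q.parent.toSet := by
  obtain ⟨y, hy1, hy2⟩ := exists_mem_parent_not_mem hd Q
  intro h; rw [h] at hy2; exact hy2 hy1

/-- injectivity of toSet for d > 0 -/
lemma toSet_inj (hd : 0 < d) {P Q : DyadicCube d} (h : P.toSet = Q.toSet) : P = Q := by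
  -- first: generations agree
  obtain ⟨x, hxP⟩ := toSet_nonempty P
  have hxQ : x ∈ Q.toSet := h ▸ hxP
  have key : ∀ P' Q' : DyadicCube d, P'.toSet = Q'.toSet → x ∈ P'.toSet → x ∈ Q'.toSet →
      ¬ P'.n < Q'.n := by
    intro P' Q' hh hxP' hxQ' hlt
    have hp : x ∈ P'.parent.toSet := subset_parent _ hxP'
    have h1 : P'.parent.toSet ⊆ Q'.toSet := by
      apply toSet_subset_of_mem_of_le hp hxQ'
      simp only [parent_n]; omega
    have h2 : P'.toSet ⊆ P'.parent.toSet := subset_parent _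
    obtain ⟨y, hy1, hy2⟩ := exists_mem_parent_not_mem hd P'
    have : y ∈ P'.toSet := by rw [hh]; exact h1 hy1
    exact hy2 this
  have hn : P.n = Q.n := by
    rcases lt_trichotomy P.n Q.n with hlt | heq | hgt
    · exact absurd hlt (key P Q h hxP hxQ)
    · exact heq
    · exact absurd hgt (key Q P h.symm hxQ hxP)
  rw [eq_cubeOf_of_mem hxP, eq_cubeOf_of_mem hxQ, hn]

end DyadicCube


section PartB
namespace DyadicCube

open Metric MeasureTheory Filter

variable {d : ℕ}

lemma toSet_measurableSet (Q : DyadicCube d) : MeasurableSet Q.toSet := by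
  have : Q.toSet = Set.pi Set.univ
      (fun i => Set.Ico ((Q.m i : ℝ) * 2 ^ Q.n) (((Q.m i : ℝ) + 1) * 2 ^ Q.n)) := by
    ext x; simp [toSet, Set.mem_pi, Set.mem_Ico]
  rw [this]
  exact MeasurableSet.univ_pi fun i => measurableSet_Ico

lemma toSet_subset_Icc (Q : DyadicCube d) :
    Q.toSet ⊆ Set.Icc (fun i => (Q.m i : ℝ) * 2 ^ Q.n)
      (fun i => ((Q.m i : ℝ) + 1) * 2 ^ Q.n) := by
  intro x hx
  constructor
  · intro i; exact (hx i).1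
  · intro i; exact (hx i).2.le

lemma measure_toSet_lt_top (μ : Measure (Fin d → ℝ)) [IsLocallyFiniteMeasure μ]
    (Q : DyadicCube d) : μ Q.toSet < ⊤ :=
  lt_of_le_of_lt (measure_mono Q.toSet_subset_Icc) isCompact_Icc.measure_lt_top

lemma integrableOn_toSet {μ : Measure (Fin d → ℝ)} {f : (Fin d → ℝ) → ℝ}
    (hf : LocallyIntegrable f μ) (Q : DyadicCube d) : IntegrableOn f Q.toSet μ :=
  (hf.integrableOn_isCompact isCompact_Icc).mono_set Q.toSet_subset_Icc

lemma dist_le_of_mem {Q : DyadicCube d} {x y : Fin d → ℝ}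
    (hx : x ∈ Q.toSet) (hy : y ∈ Q.toSet) : dist x y ≤ 2 ^ Q.n := by
  refine (dist_pi_le_iff (two_zpow_pos Q.n).le).2 fun i => ?_
  rw [Real.dist_eq, abs_le]
  have h1 := (hx i).1; have h2 := (hx i).2
  have h3 := (hy i).1; have h4 := (hy i).2
  constructor <;> nlinarith

lemma toSet_subset_closedBall {Q : DyadicCube d} {x : Fin d → ℝ} (hx : x ∈ Q.toSet) :
    Q.toSet ⊆ closedBall x (2 ^ Q.n) :=
  fun y hy => by rw [mem_closedBall]; exact dist_le_of_mem hy hx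

/-- if a cube fits in a small ball, its sidelength is small (d > 0) -/
lemma zpow_le_of_subset_closedBall (hd : 0 < d) {Q : DyadicCube d} {z : Fin d → ℝ} {r : ℝ}
    (h : Q.toSet ⊆ closedBall z r) : (2:ℝ) ^ Q.n ≤ 4 * r := by
  set i₀ : Fin d := ⟨0, hd⟩
  have h2 := two_zpow_pos Q.n
  set y := Function.update Q.corner i₀ ((Q.m i₀ : ℝ) * 2 ^ Q.n + 2 ^ Q.n / 2) with hy
  have hymem : y ∈ Q.toSet := by
    intro i
    by_cases hi : i = i₀
    · subst hi
      rw [hy, Function.update_self]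
      constructor <;> nlinarith
    · rw [hy, Function.update_of_ne hi]
      exact Q.corner_mem i
  have hc := h (Q.corner_mem)
  have hyb := h hymem
  rw [mem_closedBall] at hc hyb
  have hdist : dist y Q.corner ≥ 2 ^ Q.n / 2 := by
    have : dist (y i₀) (Q.corner i₀) ≤ dist y Q.corner := dist_le_pi_dist y Q.corner i₀
    rw [hy, Function.update_self] at this
    simp only [corner] at this
    rw [Real.dist_eq] at this
    rw [show (Q.m i₀ : ℝ) * 2 ^ Q.n + 2 ^ Q.n / 2 - (Q.m i₀ : ℝ) * 2 ^ Q.n = 2 ^ Q.n / 2 by ring]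
      at this
    rwa [abs_of_pos (by positivity)] at this
  have := dist_triangle y z Q.corner
  rw [dist_comm z Q.corner] at this
  have hzy : dist y z ≤ r := hyb
  have hzc : dist Q.corner z ≤ r := hc
  rw [dist_comm Q.corner z] at hzc
  linarith [dist_comm y z ▸ hzy]

lemma exists_small_cube (x : Fin d → ℝ) {ε : ℝ} (hε : 0 < ε) :
    ∃ Q : DyadicCube d, x ∈ Q.toSet ∧ Q.toSet ⊆ closedBall x ε := by
  obtain ⟨k, hk⟩ := exists_pow_lt_of_lt_one hε (by norm_num : (1:ℝ)/2 < 1)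
  have hk' : (2:ℝ) ^ (-(k:ℤ)) ≤ ε := by
    rw [zpow_neg, zpow_natCast]
    rw [div_pow, one_pow] at hk
    rw [inv_eq_one_div]
    exact hk.le
  refine ⟨cubeOf (-(k:ℤ)) x, mem_cubeOf _ _, ?_⟩
  exact (toSet_subset_closedBall (mem_cubeOf _ _)).trans (closedBall_subset_closedBall hk')

lemma interior_nonempty (Q : DyadicCube d) : (interior Q.toSet).Nonempty := by
  have h2 := two_zpow_pos Q.n
  have hsub : Set.pi Set.univ
      (fun i => Set.Ioo ((Q.m i : ℝ) * 2 ^ Q.n) (((Q.m i : ℝ) + 1) * 2 ^ Q.n)) ⊆ Q.toSet := by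
    intro x hx i
    have := hx i (Set.mem_univ i)
    exact ⟨this.1.le, this.2⟩
  have hopen : IsOpen (Set.pi Set.univ
      (fun i => Set.Ioo ((Q.m i : ℝ) * 2 ^ Q.n) (((Q.m i : ℝ) + 1) * 2 ^ Q.n))) :=
    isOpen_set_pi Set.finite_univ fun i _ => isOpen_Ioo
  have hne : (Set.pi Set.univ
      (fun i => Set.Ioo ((Q.m i : ℝ) * 2 ^ Q.n) (((Q.m i : ℝ) + 1) * 2 ^ Q.n))).Nonempty := by
    refine ⟨fun i => (Q.m i : ℝ) * 2 ^ Q.n + 2 ^ Q.n / 2, fun i _ => ?_⟩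
    constructor <;> nlinarith
  exact hne.mono (interior_maximal hsub hopen)

/-- The Vitali family of dyadic cubes. -/
def vitaliFamily (μ : MeasureTheory.Measure (Fin d → ℝ)) : VitaliFamily μ where
  setsAt x := {s | ∃ Q : DyadicCube d, x ∈ Q.toSet ∧ s = Q.toSet}
  measurableSet x s hs := by obtain ⟨Q, -, rfl⟩ := hs; exact Q.toSet_measurableSet
  nonempty_interior x s hs := by obtain ⟨Q, -, rfl⟩ := hs; exact Q.interior_nonempty
  nontrivial x ε hε := by
    obtain ⟨Q, hQ1, hQ2⟩ := exists_small_cube x hε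
    exact ⟨Q.toSet, ⟨Q, hQ1, rfl⟩, hQ2⟩
  covering := by
    intro s F hF hFfine
    classical
    rcases Nat.eq_zero_or_pos d with hd0 | hd
    · -- d = 0 : all cubes are univ
      rcases Set.eq_empty_or_nonempty s with hs | ⟨x₀, hx₀⟩
      · exact ⟨∅, by simp, by simp [Set.PairwiseDisjoint, Set.Pairwise], by simp,
          by simp [hs]⟩
      · obtain ⟨a, haF, -⟩ := hFfine x₀ hx₀ 1 one_pos
        obtain ⟨Q, -, rfl⟩ := hF x₀ hx₀ haF
        have huniv : Q.toSet = Set.univ := by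
          ext y; simp only [Set.mem_univ, iff_true]
          intro i; exact absurd (i.2) (by omega)
        refine ⟨{(x₀, Q.toSet)}, by simpa using hx₀, ?_, by simpa using haF, ?_⟩
        · simp [Set.PairwiseDisjoint, Set.Pairwise]
        · simp [huniv]
    · -- d > 0
      set T : Set (DyadicCube d) :=
        {Q | ∃ x ∈ s, Q.toSet ∈ F x ∧ Q.toSet ⊆ closedBall x 1} with hT
      have hTn : ∀ Q ∈ T, Q.n ≤ 2 := by
        rintro Q ⟨x, -, -, hball⟩
        have := zpow_le_of_subset_closedBall hd hball
        have h4 : (4:ℝ) * 1 ≤ 2 ^ (2:ℤ) := by norm_num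
        exact (zpow_le_zpow_iff_right₀ (one_lt_two (α := ℝ))).1 (this.trans h4)
      have hcov : ∀ x ∈ s, ∃ Q ∈ T, x ∈ Q.toSet := by
        intro x hx
        obtain ⟨a, haF, hball⟩ := hFfine x hx 1 one_pos
        obtain ⟨Q, hxQ, rfl⟩ := hF x hx haF
        exact ⟨Q, ⟨x, hx, haF, hball⟩, hxQ⟩
      set M : Set (DyadicCube d) :=
        {Q ∈ T | ∀ Q' ∈ T, Q.toSet ⊆ Q'.toSet → Q = Q'} with hM
      have hmax : ∀ Q ∈ T, ∃ Q' ∈ M, Q.toSet ⊆ Q'.toSet := by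
        intro Q hQ
        set x := Q.corner with hx
        have hxQ : x ∈ Q.toSet := Q.corner_mem
        have hQeq : Q = cubeOf Q.n x := eq_cubeOf_of_mem hxQ
        obtain ⟨l, ⟨hl1, hl2, hl3⟩, hlmax⟩ := Int.exists_greatest_of_bdd
          (P := fun k => Q.n ≤ k ∧ k ≤ 2 ∧ cubeOf k x ∈ T)
          ⟨2, fun z hz => hz.2.1⟩ ⟨Q.n, le_refl _, hTn Q hQ, hQeq ▸ hQ⟩
        refine ⟨cubeOf l x, ⟨hl3, ?_⟩, hQeq ▸ cubeOf_subset_cubeOf hl1⟩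
        intro Q'' hQ'' hsub
        have hxQ'' : x ∈ Q''.toSet := hsub (mem_cubeOf l x)
        have hQ''eq : Q'' = cubeOf Q''.n x := eq_cubeOf_of_mem hxQ''
        rcases le_or_gt Q''.n l with hle | hlt
        · have hsub2 : Q''.toSet ⊆ (cubeOf l x).toSet :=
            toSet_subset_of_mem_of_le hxQ'' (mem_cubeOf l x) hle
          exact toSet_inj hd (le_antisymm hsub hsub2)
        · exfalso
          have : Q''.n ≤ l := hlmax Q''.n ⟨by omega, hTn Q'' hQ'', hQ''eq ▸ hQ''⟩
          omega
      -- choose witnesses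
      have hwit : ∀ Q ∈ M, ∃ x ∈ s, Q.toSet ∈ F x := by
        rintro Q ⟨⟨x, hx, hFx, -⟩, -⟩
        exact ⟨x, hx, hFx⟩
      choose! xw hxw1 hxw2 using hwit
      refine ⟨(fun Q => (xw Q, Q.toSet)) '' M, ?_, ?_, ?_, ?_⟩
      · rintro p ⟨Q, hQ, rfl⟩; exact hxw1 Q hQ
      · rintro p ⟨Q₁, hQ₁, rfl⟩ q ⟨Q₂, hQ₂, rfl⟩ hpq
        have hne : Q₁ ≠ Q₂ := fun h => hpq (by rw [h])
        simp only [Function.onFun]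
        rw [Set.disjoint_left]
        intro y hy1 hy2
        apply hne
        rcases le_total Q₁.n Q₂.n with hle | hle
        · exact hQ₁.2 Q₂ hQ₂.1 (toSet_subset_of_mem_of_le hy1 hy2 hle)
        · exact (hQ₂.2 Q₁ hQ₁.1 (toSet_subset_of_mem_of_le hy2 hy1 hle)).symm
      · rintro p ⟨Q, hQ, rfl⟩; exact hxw2 Q hQ
      · have : s ⊆ ⋃ p ∈ (fun Q => (xw Q, Q.toSet)) '' M, p.2 := by
          intro x hx
          obtain ⟨Q, hQT, hxQ⟩ := hcov x hx
          obtain ⟨Q', hQ'M, hsub⟩ := hmax Q hQT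
          exact Set.mem_biUnion (Set.mem_image_of_mem _ hQ'M) (hsub hxQ)
        rw [Set.diff_eq_empty.2 this]
        exact measure_empty

end DyadicCube
end PartB

section PartC
open MeasureTheory Metric Filter DyadicCube

variable {d : ℕ}

lemma ae_cube_avg_bound (hd : 0 < d) (μ : Measure (Fin d → ℝ)) [IsLocallyFiniteMeasure μ]
    (f : (Fin d → ℝ) → ℝ) (hf : LocallyIntegrable f μ) (R : DyadicCube d) (a lam : ℝ) :
    ∀ᵐ x ∂μ, (x ∈ R.toSet ∧ ∀ P : DyadicCube d, x ∈ P.toSet → P.toSet ⊆ R.toSet →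
        (∫ y in P.toSet, |f y - a| ∂μ) ≤ lam * (μ P.toSet).toReal) → |f x - a| ≤ lam := by
  set v := vitaliFamily (d := d) μ with hv
  filter_upwards [v.ae_tendsto_average_norm_sub hf, v.ae_eventually_measure_pos] with x hx hpos
  rintro ⟨hxR, hG⟩
  by_contra hcon
  push_neg at hcon
  set ε := (|f x - a| - lam) / 2 with hε
  have hεpos : 0 < ε := by rw [hε]; linarith
  have hev1 : ∀ᶠ b in v.filterAt x, (⨍ y in b, ‖f y - f x‖ ∂μ) < ε :=
    hx.eventually_lt_const hεpos
  have hr0 : (0:ℝ) < 2 ^ R.n / 8 := by positivity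
  have hev2 := v.eventually_filterAt_subset_closedBall x hr0
  have hev3 := v.eventually_filterAt_mem_setsAt x
  obtain ⟨b, ⟨⟨hb1, hb2⟩, hb3⟩, hb4⟩ := (((hev1.and hev2).and hev3).and hpos).exists
  obtain ⟨P, hxP, rfl⟩ := hb3
  -- P is a small cube containing x, hence P ⊆ R
  have hPn : P.n ≤ R.n := by
    have h1 := zpow_le_of_subset_closedBall hd hb2
    have h2 : (4:ℝ) * (2 ^ R.n / 8) ≤ 2 ^ R.n := by
      have := two_zpow_pos R.n; linarith
    exact (zpow_le_zpow_iff_right₀ (one_lt_two (α := ℝ))).1 (h1.trans h2)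
  have hPR : P.toSet ⊆ R.toSet := toSet_subset_of_mem_of_le hxP hxR hPn
  have hint := hG P hxP hPR
  have hμP : 0 < μ P.toSet := hb4
  have hμPt : μ P.toSet < ⊤ := measure_toSet_lt_top μ P
  have hμto : 0 < (μ P.toSet).toReal := ENNReal.toReal_pos hμP.ne' hμPt.ne
  -- integrability
  have hfP : IntegrableOn f P.toSet μ := integrableOn_toSet hf P
  have hfa : IntegrableOn (fun y => |f y - a|) P.toSet μ :=
    (hfP.sub (integrableOn_const hμPt.ne)).abs
  have hfx : IntegrableOn (fun y => ‖f y - f x‖) P.toSet μ :=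
    (hfP.sub (integrableOn_const hμPt.ne)).norm
  -- convert average bound to integral bound
  have havg : (∫ y in P.toSet, ‖f y - f x‖ ∂μ) ≤ ε * (μ P.toSet).toReal := by
    have := hb1
    rw [setAverage_eq] at this
    have h2 : (μ P.toSet).toReal⁻¹ * (∫ y in P.toSet, ‖f y - f x‖ ∂μ) < ε := by
      simpa [smul_eq_mul, measureReal_def] using this
    have h3 := mul_le_mul_of_nonneg_left h2.le hμto.le
    rw [← mul_assoc, mul_inv_cancel₀ hμto.ne', one_mul] at h3
    linarith [h3]
  -- main chain
  have hchain : |f x - a| * (μ P.toSet).toReal ≤ (lam + ε) * (μ P.toSet).toReal := by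
    have h1 : (∫ _ in P.toSet, |f x - a| ∂μ) = (μ P.toSet).toReal * |f x - a| := by
      rw [setIntegral_const, smul_eq_mul, measureReal_def]
    have h2 : (∫ y in P.toSet, |f x - a| ∂μ) ≤
        ∫ y in P.toSet, (|f y - a| + ‖f y - f x‖) ∂μ := by
      refine integral_mono (integrableOn_const hμPt.ne) (hfa.add hfx) fun y => ?_
      have : f x - a = (f y - a) + (f x - f y) := by ring
      rw [this]
      refine (abs_add_le _ _).trans ?_
      have : |f x - f y| = ‖f y - f x‖ := by
        rw [Real.norm_eq_abs, abs_sub_comm]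
      rw [this]
    rw [integral_add hfa hfx] at h2
    rw [h1] at h2
    nlinarith [hint, havg]
  have hfin : |f x - a| ≤ lam + ε := le_of_mul_le_mul_right hchain hμto
  rw [hε] at hfin
  linarith

end PartC

section PartD
open MeasureTheory Metric Filter DyadicCube

variable {d : ℕ}

lemma DyadicCube.n_le_of_subset (hd : 0 < d) {S R : DyadicCube d}
    (h : S.toSet ⊆ R.toSet) : S.n ≤ R.n := by
  by_contra hlt
  push_neg at hlt
  have hx : S.corner ∈ R.toSet := h S.corner_mem
  have h2 : R.toSet ⊆ S.toSet := toSet_subset_of_mem_of_le hx S.corner_mem hlt.le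
  have : S = R := toSet_inj hd (le_antisymm h h2)
  rw [this] at hlt
  exact lt_irrefl _ hlt

lemma DyadicCube.n_lt_of_subset_ne (hd : 0 < d) {S R : DyadicCube d}
    (h : S.toSet ⊆ R.toSet) (hne : S ≠ R) : S.n < R.n := by
  rcases lt_or_eq_of_le (n_le_of_subset hd h) with hlt | heq
  · exact hlt
  · exfalso
    have hx : S.corner ∈ R.toSet := h S.corner_mem
    have h2 : R.toSet ⊆ S.toSet := toSet_subset_of_mem_of_le hx S.corner_mem heq.ge
    exact hne (toSet_inj hd (le_antisymm h h2))

/-- existence of maximal cubes in a family with bounded generation -/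
lemma DyadicCube.exists_maximal (hd : 0 < d) (T : Set (DyadicCube d)) (nmax : ℤ)
    (hbound : ∀ Q ∈ T, Q.n ≤ nmax) {Q : DyadicCube d} (hQ : Q ∈ T) :
    ∃ Q' ∈ T, Q.toSet ⊆ Q'.toSet ∧ ∀ P ∈ T, Q'.toSet ⊆ P.toSet → Q' = P := by
  set x := Q.corner with hx
  have hxQ : x ∈ Q.toSet := Q.corner_mem
  have hQeq : Q = cubeOf Q.n x := eq_cubeOf_of_mem hxQ
  obtain ⟨l, ⟨hl1, hl2, hl3⟩, hlmax⟩ := Int.exists_greatest_of_bdd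
    (P := fun k => Q.n ≤ k ∧ k ≤ nmax ∧ cubeOf k x ∈ T)
    ⟨nmax, fun z hz => hz.2.1⟩ ⟨Q.n, le_refl _, hbound Q hQ, hQeq ▸ hQ⟩
  refine ⟨cubeOf l x, hl3, hQeq ▸ cubeOf_subset_cubeOf hl1, ?_⟩
  intro P hP hsub
  have hxP : x ∈ P.toSet := hsub (mem_cubeOf l x)
  have hPeq : P = cubeOf P.n x := eq_cubeOf_of_mem hxP
  rcases le_or_gt P.n l with hle | hlt
  · have hsub2 : P.toSet ⊆ (cubeOf l x).toSet :=
      toSet_subset_of_mem_of_le hxP (mem_cubeOf l x) hle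
    exact toSet_inj hd (le_antisymm hsub hsub2)
  · exfalso
    have : P.n ≤ l := hlmax P.n ⟨by omega, hbound P hP, hPeq ▸ hP⟩
    omega

/-- Main Calderon-Zygmund style iteration -/
lemma jn_claim (hd : 0 < d) (μ : Measure (Fin d → ℝ)) [IsLocallyFiniteMeasure μ]
    (f : (Fin d → ℝ) → ℝ) (hf : LocallyIntegrable f μ) (N : ℝ) (hNpos : 0 < N)
    (hN : ∀ R : DyadicCube d, 0 < μ R.toSet →
      (∫ x in R.toSet, |f x - avg μ f R.parent.toSet| ∂μ) ≤ N * (μ R.toSet).toReal) :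
    ∀ (k : ℕ) (R : DyadicCube d) (a : ℝ), 0 < μ R.toSet →
      (∫ x in R.toSet, |f x - a| ∂μ) ≤ N * (μ R.toSet).toReal →
      μ (R.toSet ∩ {x | 3*N*k < |f x - a|}) ≤ μ R.toSet / 2^k := by
  intro k
  induction k with
  | zero =>
      intro R a _ _
      simpa using measure_mono (Set.inter_subset_left)
  | succ k ih =>
      intro R a hμR hint
      have hμRt : μ R.toSet < ⊤ := measure_toSet_lt_top μ R
      have hμRto : 0 < (μ R.toSet).toReal := ENNReal.toReal_pos hμR.ne' hμRt.ne
      classical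
      set Bad : Set (DyadicCube d) := {S | S.toSet ⊆ R.toSet ∧ 0 < μ S.toSet ∧
        2*N*(μ S.toSet).toReal < ∫ x in S.toSet, |f x - a| ∂μ} with hBad
      have hRnotBad : R ∉ Bad := by
        rintro ⟨-, -, hgt⟩
        nlinarith [hint, hμRto]
      have hbound : ∀ S ∈ Bad, S.n ≤ R.n := fun S hS => n_le_of_subset hd hS.1
      set MaxBad : Set (DyadicCube d) := {S ∈ Bad | ∀ T ∈ Bad, S.toSet ⊆ T.toSet → S = T}
        with hMaxBad
      have hmax : ∀ S ∈ Bad, ∃ T ∈ MaxBad, S.toSet ⊆ T.toSet := by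
        intro S hS
        obtain ⟨T, hT, hsub, hTmax⟩ := exists_maximal hd Bad R.n hbound hS
        exact ⟨T, ⟨hT, hTmax⟩, hsub⟩
      have hdisj : MaxBad.PairwiseDisjoint toSet := by
        intro S₁ hS₁ S₂ hS₂ hne
        rw [Function.onFun, Set.disjoint_left]
        intro y hy1 hy2
        apply hne
        rcases le_total S₁.n S₂.n with hle | hle
        · exact hS₁.2 S₂ hS₂.1 (toSet_subset_of_mem_of_le hy1 hy2 hle)
        · exact (hS₂.2 S₁ hS₁.1 (toSet_subset_of_mem_of_le hy2 hy1 hle)).symm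
      -- total measure of maximal bad cubes
      have hNN : (ENNReal.ofReal N) ≠ 0 := by
        simp [ENNReal.ofReal_eq_zero]; linarith
      have hNT : (ENNReal.ofReal N) ≠ ⊤ := ENNReal.ofReal_ne_top
      have hsum : (∑' S : ↥MaxBad, μ (S : DyadicCube d).toSet) ≤ μ R.toSet / 2 := by
        have key : ∀ S : ↥MaxBad, 2 * ENNReal.ofReal N * μ (S : DyadicCube d).toSet ≤
            ∫⁻ x in (S : DyadicCube d).toSet, ENNReal.ofReal |f x - a| ∂μ := by
          rintro ⟨S, hS, -⟩
          have hfa : IntegrableOn (fun y => |f y - a|) S.toSet μ :=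
            ((integrableOn_toSet hf S).sub
              (integrableOn_const (measure_toSet_lt_top μ S).ne)).abs
          have heq : ENNReal.ofReal (∫ x in S.toSet, |f x - a| ∂μ) =
              ∫⁻ x in S.toSet, ENNReal.ofReal |f x - a| ∂μ :=
            ofReal_integral_eq_lintegral_ofReal hfa
              (Filter.Eventually.of_forall fun y => abs_nonneg _)
          rw [← heq]
          have h1 : 2 * N * (μ S.toSet).toReal ≤ ∫ x in S.toSet, |f x - a| ∂μ := hS.2.2.le
          calc 2 * ENNReal.ofReal N * μ S.toSet
              = ENNReal.ofReal (2 * N * (μ S.toSet).toReal) := by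
                rw [ENNReal.ofReal_mul (by positivity), ENNReal.ofReal_mul (by norm_num),
                  ENNReal.ofReal_toReal (measure_toSet_lt_top μ S).ne]
                norm_num
            _ ≤ ENNReal.ofReal (∫ x in S.toSet, |f x - a| ∂μ) := ENNReal.ofReal_le_ofReal h1
        have hsum2 : (∑' S : ↥MaxBad, 2 * ENNReal.ofReal N * μ (S : DyadicCube d).toSet) ≤
            ∑' S : ↥MaxBad, ∫⁻ x in (S : DyadicCube d).toSet, ENNReal.ofReal |f x - a| ∂μ :=
          ENNReal.tsum_le_tsum key
        have hsum3 : (∑' S : ↥MaxBad, ∫⁻ x in (S : DyadicCube d).toSet,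
            ENNReal.ofReal |f x - a| ∂μ) ≤ ∫⁻ x in R.toSet, ENNReal.ofReal |f x - a| ∂μ := by
          rw [← lintegral_iUnion (fun S : ↥MaxBad => (S : DyadicCube d).toSet_measurableSet)
            (fun S T hST => hdisj S.2 T.2 (fun h => hST (Subtype.ext h)))]
          refine lintegral_mono' (Measure.restrict_mono ?_ le_rfl) le_rfl
          exact Set.iUnion_subset fun S => S.2.1.1
        have hR : (∫⁻ x in R.toSet, ENNReal.ofReal |f x - a| ∂μ) ≤
            ENNReal.ofReal N * μ R.toSet := by
          have hfa : IntegrableOn (fun y => |f y - a|) R.toSet μ :=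
            ((integrableOn_toSet hf R).sub (integrableOn_const hμRt.ne)).abs
          rw [← ofReal_integral_eq_lintegral_ofReal hfa
            (Filter.Eventually.of_forall fun y => abs_nonneg _)]
          calc ENNReal.ofReal (∫ x in R.toSet, |f x - a| ∂μ)
              ≤ ENNReal.ofReal (N * (μ R.toSet).toReal) := ENNReal.ofReal_le_ofReal hint
            _ = ENNReal.ofReal N * μ R.toSet := by
                rw [ENNReal.ofReal_mul hNpos.le, ENNReal.ofReal_toReal hμRt.ne]
        have hfinal : 2 * ENNReal.ofReal N * (∑' S : ↥MaxBad, μ (S : DyadicCube d).toSet) ≤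
            ENNReal.ofReal N * μ R.toSet := by
          rw [ENNReal.tsum_mul_left] at hsum2
          exact hsum2.trans (hsum3.trans hR)
        have h2X : 2 * (∑' S : ↥MaxBad, μ (S : DyadicCube d).toSet) ≤ μ R.toSet := by
          refine (ENNReal.mul_le_mul_iff_right hNN hNT).1 ?_
          calc ENNReal.ofReal N * (2 * (∑' S : ↥MaxBad, μ (S : DyadicCube d).toSet))
              = 2 * ENNReal.ofReal N * (∑' S : ↥MaxBad, μ (S : DyadicCube d).toSet) := by
                ring
            _ ≤ ENNReal.ofReal N * μ R.toSet := hfinal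
        rw [ENNReal.le_div_iff_mul_le (Or.inl two_ne_zero) (Or.inl ENNReal.ofNat_ne_top)]
        rw [mul_comm]
        exact h2X
      -- properties of each maximal bad cube
      have hcube : ∀ S ∈ MaxBad,
          μ (S.toSet ∩ {x | 3*N*(k+1:ℕ) < |f x - a|}) ≤ μ S.toSet / 2^k := by
        intro S hS
        set b := avg μ f S.parent.toSet with hb
        have hSR : S.toSet ⊆ R.toSet := hS.1.1
        have hμS : 0 < μ S.toSet := hS.1.2.1
        have hSneR : S ≠ R := fun h => hRnotBad (h ▸ hS.1)
        have hSn : S.n < R.n := n_lt_of_subset_ne hd hSR hSneR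
        have hparsub : S.parent.toSet ⊆ R.toSet := by
          have hx1 : S.corner ∈ S.parent.toSet := subset_parent S S.corner_mem
          have hx2 : S.corner ∈ R.toSet := hSR S.corner_mem
          exact toSet_subset_of_mem_of_le hx1 hx2 (by rw [parent_n]; omega)
        have hμpar : 0 < μ S.parent.toSet := hμS.trans_le (measure_mono (subset_parent S))
        have hμpart : μ S.parent.toSet < ⊤ := measure_toSet_lt_top μ S.parent
        have hμparto : 0 < (μ S.parent.toSet).toReal :=
          ENNReal.toReal_pos hμpar.ne' hμpart.ne
        have hparnotbad : S.parent ∉ Bad := by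
          intro hbad
          have := hS.2 S.parent hbad (subset_parent S)
          exact toSet_ne_parent hd S (congrArg toSet this)
        have hparint : (∫ x in S.parent.toSet, |f x - a| ∂μ) ≤
            2*N*(μ S.parent.toSet).toReal := by
          by_contra hc
          push_neg at hc
          exact hparnotbad ⟨hparsub, hμpar, hc⟩
        -- |b - a| ≤ 2N
        have hfpar : IntegrableOn f S.parent.toSet μ := integrableOn_toSet hf S.parent
        have hba : |b - a| ≤ 2*N := by
          have h1 : b - a = (∫ x in S.parent.toSet, (f x - a) ∂μ) /
              (μ S.parent.toSet).toReal := by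
            rw [hb]
            show (∫ x in S.parent.toSet, f x ∂μ) / (μ S.parent.toSet).toReal - a = _
            rw [integral_sub hfpar (integrableOn_const hμpart.ne),
              setIntegral_const, smul_eq_mul, measureReal_def]
            field_simp
          rw [h1, abs_div, abs_of_pos hμparto, div_le_iff₀ hμparto]
          calc |∫ x in S.parent.toSet, (f x - a) ∂μ|
              = ‖∫ x in S.parent.toSet, (f x - a) ∂μ‖ := (Real.norm_eq_abs _).symm
            _ ≤ ∫ x in S.parent.toSet, ‖f x - a‖ ∂μ := norm_integral_le_integral_norm _
            _ = ∫ x in S.parent.toSet, |f x - a| ∂μ := by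
                simp [Real.norm_eq_abs]
            _ ≤ 2*N*(μ S.parent.toSet).toReal := hparint
        -- inclusion
        have hincl : S.toSet ∩ {x | 3*N*(k+1:ℕ) < |f x - a|} ⊆
            S.toSet ∩ {x | 3*N*k < |f x - b|} := by
          rintro x ⟨hx1, hx2⟩
          refine ⟨hx1, ?_⟩
          simp only [Set.mem_setOf_eq] at hx2 ⊢
          push_cast at hx2
          have htri : |f x - a| ≤ |f x - b| + |b - a| := by
            have : f x - a = (f x - b) + (b - a) := by ring
            rw [this]; exact abs_add_le _ _
          nlinarith
        refine (measure_mono hincl).trans ?_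
        exact ih S b hμS (hN S hμS)
      -- combine
      set X := R.toSet ∩ {x | 3*N*(k+1:ℕ) < |f x - a|} with hX
      set U := ⋃ S ∈ MaxBad, (S:DyadicCube d).toSet with hU
      have hXU : μ (X \ U) = 0 := by
        have hae := ae_cube_avg_bound hd μ f hf R a (2*N)
        rw [MeasureTheory.ae_iff] at hae
        refine measure_mono_null ?_ hae
        rintro x ⟨⟨hxR, hx2⟩, hxU⟩
        simp only [Set.mem_setOf_eq] at hx2 ⊢
        push_neg
        refine ⟨⟨hxR, ?_⟩, ?_⟩
        · intro P hxP hPR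
          by_contra hc
          push_neg at hc
          have hμP : 0 < μ P.toSet := by
            rcases eq_or_lt_of_le (zero_le : (0:ℝ≥0∞) ≤ μ P.toSet) with h0 | h0
            · exfalso
              have hz : μ P.toSet = 0 := h0.symm
              have hrz : μ.restrict P.toSet = 0 := Measure.restrict_eq_zero.2 hz
              rw [hrz, MeasureTheory.integral_zero_measure, hz] at hc
              norm_num at hc
            · exact h0
          have hPbad : P ∈ Bad := ⟨hPR, hμP, hc⟩
          obtain ⟨T, hT, hsub⟩ := hmax P hPbad
          exact hxU (Set.mem_biUnion hT (hsub hxP))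
        · push_cast at hx2
          nlinarith [hx2, hNpos, Nat.cast_nonneg (α := ℝ) k]
      have hmain : μ X ≤ μ (X \ U) + μ (X ∩ U) := by
        rw [add_comm]
        exact measure_le_inter_add_diff μ X U
      have hXinU : μ (X ∩ U) ≤ μ R.toSet / 2 / 2^k := by
        have hsub : X ∩ U ⊆ ⋃ S : ↥MaxBad,
            ((S:DyadicCube d).toSet ∩ {x | 3*N*(k+1:ℕ) < |f x - a|}) := by
          rintro x ⟨hx1, hx2⟩
          rw [hU] at hx2
          simp only [Set.mem_iUnion] at hx2 ⊢
          obtain ⟨S, hS, hxS⟩ := hx2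
          exact ⟨⟨S, hS⟩, hxS, hx1.2⟩
        refine (measure_mono hsub).trans ?_
        refine (measure_iUnion_le _).trans ?_
        have hterm : ∀ S : ↥MaxBad,
            μ ((S:DyadicCube d).toSet ∩ {x | 3*N*(k+1:ℕ) < |f x - a|}) ≤
            μ (S:DyadicCube d).toSet * (2^k)⁻¹ := by
          intro S
          rw [← div_eq_mul_inv]
          exact hcube S S.2
        refine (ENNReal.tsum_le_tsum hterm).trans ?_
        rw [ENNReal.tsum_mul_right, div_eq_mul_inv (μ R.toSet / 2)]
        exact mul_le_mul_left hsum _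
      calc μ X ≤ μ (X \ U) + μ (X ∩ U) := hmain
        _ = μ (X ∩ U) := by rw [hXU, zero_add]
        _ ≤ μ R.toSet / 2 / 2^k := hXinU
        _ = μ R.toSet / 2^(k+1) := by
            rw [div_eq_mul_inv, div_eq_mul_inv, div_eq_mul_inv, pow_succ,
              ENNReal.mul_inv (Or.inl (pow_ne_zero _ two_ne_zero)) (Or.inr two_ne_zero)]
            ring

end PartD

section PartE
open MeasureTheory Metric Filter DyadicCube

variable {d : ℕ}

lemma jn_master (hd : 0 < d) (μ : Measure (Fin d → ℝ)) [IsLocallyFiniteMeasure μ]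
    (f : (Fin d → ℝ) → ℝ) (hsm : StronglyMeasurable f) (hf : LocallyIntegrable f μ)
    (N : ℝ) (hNpos : 0 < N)
    (hN : ∀ R : DyadicCube d, 0 < μ R.toSet →
      (∫ x in R.toSet, |f x - avg μ f R.parent.toSet| ∂μ) ≤ N * (μ R.toSet).toReal)
    (Q : DyadicCube d) (hQ : 0 < μ Q.toSet) :
    ∫ x in Q.toSet, Real.exp (Real.log 2 / 6 * |f x - avg μ f Q.parent.toSet| / N) ∂μ ≤
      12 * (μ Q.toSet).toReal := by
  set a := avg μ f Q.parent.toSet with ha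
  set c := Real.log 2 / 6 with hc
  have hc0 : 0 ≤ c := by
    rw [hc]
    have := Real.log_nonneg (by norm_num : (1:ℝ) ≤ 2)
    linarith
  set h : (Fin d → ℝ) → ℝ := fun x => |f x - a| with hh
  have hhm : Measurable h := (hsm.measurable.sub measurable_const).abs
  have hh0 : ∀ x, 0 ≤ h x := fun x => abs_nonneg _
  have hμQt : μ Q.toSet < ⊤ := measure_toSet_lt_top μ Q
  have hdist : ∀ j : ℕ, μ (Q.toSet ∩ {x | 3*N*j < h x}) ≤ μ Q.toSet / 2^j :=
    fun j => jn_claim hd μ f hf N hNpos hN j Q a hQ (hN Q hQ)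
  set A : ℕ → Set (Fin d → ℝ) :=
    fun j => Q.toSet ∩ {x | 3*N*j ≤ h x ∧ h x < 3*N*(j+1)} with hA
  have hmeas : ∀ j, MeasurableSet (A j) := by
    intro j
    refine Q.toSet_measurableSet.inter ?_
    have : {x | 3*N*j ≤ h x ∧ h x < 3*N*(j+1)} = h ⁻¹' (Set.Ico (3*N*j) (3*N*(j+1))) := rfl
    rw [this]
    exact hhm measurableSet_Ico
  have hdisjA : Pairwise (Function.onFun Disjoint A) := by
    intro j l hjl
    rw [Function.onFun, Set.disjoint_left]
    rintro x ⟨-, hj1, hj2⟩ ⟨-, hl1, hl2⟩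
    have h1 : (j:ℝ) < (l:ℝ)+1 := by nlinarith
    have h2 : (l:ℝ) < (j:ℝ)+1 := by nlinarith
    have h1' : j < l+1 := by exact_mod_cast h1
    have h2' : l < j+1 := by exact_mod_cast h2
    omega
  have hcover : (⋃ j, A j) = Q.toSet := by
    apply Set.Subset.antisymm
    · exact Set.iUnion_subset fun j => Set.inter_subset_left
    · intro x hx
      have h3N : (0:ℝ) < 3*N := by linarith
      set j := ⌊h x / (3*N)⌋₊ with hj
      have hjle : (j:ℝ) ≤ h x / (3*N) := Nat.floor_le (by positivity)
      have hjlt : h x / (3*N) < j+1 := Nat.lt_floor_add_one _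
      refine Set.mem_iUnion.2 ⟨j, hx, ?_, ?_⟩
      · calc 3*N*(j:ℝ) ≤ 3*N*(h x / (3*N)) := by nlinarith
          _ = h x := by field_simp
      · calc h x = 3*N*(h x / (3*N)) := by field_simp
          _ < 3*N*((j:ℝ)+1) := by nlinarith
  -- pass to lintegral
  show (∫ x in Q.toSet, Real.exp (c * h x / N) ∂μ) ≤ 12 * (μ Q.toSet).toReal
  have haesm : AEStronglyMeasurable (fun x => Real.exp (c * h x / N)) (μ.restrict Q.toSet) :=
    (Real.measurable_exp.comp ((hhm.const_mul c).div_const N)).aestronglyMeasurable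
  rw [integral_eq_lintegral_of_nonneg_ae
    (Filter.Eventually.of_forall fun x => (Real.exp_pos _).le) haesm]
  have hAj : ∀ j : ℕ, μ (A j) ≤ 2 * (μ Q.toSet / 2^j) := by
    intro j
    match j with
    | 0 =>
        have : μ (A 0) ≤ μ Q.toSet := measure_mono Set.inter_subset_left
        refine this.trans ?_
        rw [pow_zero, div_one]
        nth_rewrite 1 [← one_mul (μ Q.toSet)]
        exact mul_le_mul_left one_le_two _
    | (i+1) =>
        have hsub : A (i+1) ⊆ Q.toSet ∩ {x | 3*N*i < h x} := by
          rintro x ⟨hx1, hx2, -⟩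
          refine ⟨hx1, ?_⟩
          simp only [Set.mem_setOf_eq]
          push_cast at hx2
          nlinarith
        refine (measure_mono hsub).trans ((hdist i).trans (le_of_eq ?_))
        rw [div_eq_mul_inv, div_eq_mul_inv, pow_succ,
          ENNReal.mul_inv (Or.inl (pow_ne_zero _ two_ne_zero)) (Or.inr two_ne_zero)]
        calc μ Q.toSet * (2^i)⁻¹
            = μ Q.toSet * ((2^i)⁻¹ * (2 * 2⁻¹)) := by
              rw [ENNReal.mul_inv_cancel two_ne_zero ENNReal.ofNat_ne_top, mul_one]
          _ = 2 * (μ Q.toSet * ((2^i)⁻¹ * 2⁻¹)) := by ring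
  have hexp : Real.exp (Real.log 2 / 2) ≤ 3/2 := by
    have h1 : Real.exp (Real.log 2 / 2) ^ 2 = 2 := by
      rw [← Real.exp_nat_mul]
      norm_num
      rw [show (2:ℝ) * (Real.log 2 / 2) = Real.log 2 by ring, Real.exp_log two_pos]
    nlinarith [Real.exp_pos (Real.log 2 / 2)]
  have hptw : ∀ j : ℕ, ∀ x ∈ A j,
      ENNReal.ofReal (Real.exp (c * h x / N)) ≤ ENNReal.ofReal ((3/2:ℝ)^(j+1)) := by
    intro j x hx
    apply ENNReal.ofReal_le_ofReal
    have hxlt : h x < 3*N*((j:ℝ)+1) := by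
      have := hx.2.2; push_cast at this ⊢; exact this
    have hexpo : c * h x / N ≤ ((j:ℝ)+1) * (Real.log 2 / 2) := by
      rw [div_le_iff₀ hNpos, hc]
      have hxle : h x ≤ 3*N*((j:ℝ)+1) := hxlt.le
      have hj0 : (0:ℝ) ≤ (j:ℝ)+1 := by positivity
      calc Real.log 2 / 6 * h x ≤ Real.log 2 / 6 * (3*N*((j:ℝ)+1)) := by
            apply mul_le_mul_of_nonneg_left hxle hc0
        _ = ((j:ℝ)+1) * (Real.log 2 / 2) * N := by ring
    calc Real.exp (c * h x / N) ≤ Real.exp (((j:ℝ)+1) * (Real.log 2 / 2)) :=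
          Real.exp_le_exp.2 hexpo
      _ = Real.exp (Real.log 2 / 2) ^ (j+1) := by
          rw [← Real.exp_nat_mul]
          push_cast
          ring_nf
      _ ≤ (3/2:ℝ)^(j+1) := pow_le_pow_left₀ (Real.exp_pos _).le hexp _
  have hlint : (∫⁻ x in Q.toSet, ENNReal.ofReal (Real.exp (c * h x / N)) ∂μ) ≤
      12 * μ Q.toSet := by
    have hstep : (∫⁻ x in Q.toSet, ENNReal.ofReal (Real.exp (c * h x / N)) ∂μ) =
        ∑' j : ℕ, ∫⁻ x in A j, ENNReal.ofReal (Real.exp (c * h x / N)) ∂μ := by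
      rw [← hcover]
      exact lintegral_iUnion hmeas hdisjA _
    rw [hstep]
    have hterm : ∀ j : ℕ,
        (∫⁻ x in A j, ENNReal.ofReal (Real.exp (c * h x / N)) ∂μ) ≤
        ENNReal.ofReal (3*(3/4:ℝ)^j) * μ Q.toSet := by
      intro j
      calc (∫⁻ x in A j, ENNReal.ofReal (Real.exp (c * h x / N)) ∂μ)
          ≤ ∫⁻ _ in A j, ENNReal.ofReal ((3/2:ℝ)^(j+1)) ∂μ :=
            setLIntegral_mono measurable_const (hptw j)
        _ = ENNReal.ofReal ((3/2:ℝ)^(j+1)) * μ (A j) := setLIntegral_const _ _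
        _ ≤ ENNReal.ofReal ((3/2:ℝ)^(j+1)) * (2 * (μ Q.toSet / 2^j)) :=
            mul_le_mul_right (hAj j) _
        _ = ENNReal.ofReal (3*(3/4:ℝ)^j) * μ Q.toSet := by
            have hinv : ((2:ℝ≥0∞)^j)⁻¹ = ENNReal.ofReal (((2:ℝ)^j)⁻¹) := by
              rw [ENNReal.ofReal_inv_of_pos (by positivity),
                ENNReal.ofReal_pow (by norm_num)]
              norm_num
            have htwo : (2:ℝ≥0∞) = ENNReal.ofReal (2:ℝ) := by norm_num
            rw [div_eq_mul_inv (μ Q.toSet), hinv]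
            nth_rewrite 1 [htwo]
            rw [show ENNReal.ofReal ((3/2:ℝ)^(j+1)) * (ENNReal.ofReal (2:ℝ) *
                (μ Q.toSet * ENNReal.ofReal (((2:ℝ)^j)⁻¹))) =
                ENNReal.ofReal ((3/2:ℝ)^(j+1)) * ENNReal.ofReal (2:ℝ) *
                ENNReal.ofReal (((2:ℝ)^j)⁻¹) * μ Q.toSet from by ring]
            rw [← ENNReal.ofReal_mul (by positivity), ← ENNReal.ofReal_mul (by positivity)]
            congr 2
            rw [div_pow, div_pow, show (4:ℝ) = 2*2 by norm_num, mul_pow, pow_succ]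
            field_simp
            ring
    refine (ENNReal.tsum_le_tsum hterm).trans (le_of_eq ?_)
    have hr : ∀ j : ℕ, ENNReal.ofReal (3*(3/4:ℝ)^j) = 3 * ((3:ℝ≥0∞)/4)^j := by
      intro j
      rw [ENNReal.ofReal_mul (by norm_num), ENNReal.ofReal_pow (by norm_num)]
      congr 1
      · norm_num
      · congr 1
        rw [ENNReal.ofReal_div_of_pos (by norm_num)]
        norm_num
    calc (∑' j : ℕ, ENNReal.ofReal (3*(3/4:ℝ)^j) * μ Q.toSet)
        = ∑' j : ℕ, 3 * μ Q.toSet * ((3:ℝ≥0∞)/4)^j := by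
          congr 1; funext j; rw [hr j]; ring
      _ = 3 * μ Q.toSet * (1 - (3:ℝ≥0∞)/4)⁻¹ := by
          rw [ENNReal.tsum_mul_left, ENNReal.tsum_geometric]
      _ = 12 * μ Q.toSet := by
          have h34 : (1:ℝ≥0∞) - 3/4 = 4⁻¹ := by
            have h4 : (4:ℝ≥0∞) ≠ 0 := by norm_num
            have ht : (4:ℝ≥0∞) ≠ ⊤ := by norm_num
            rw [ENNReal.sub_eq_of_eq_add (by simp [ENNReal.div_eq_top])]
            rw [inv_eq_one_div, ENNReal.div_add_div_same, ENNReal.eq_div_iff h4 ht]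
            norm_num
          rw [h34, inv_inv]
          ring
  calc (∫⁻ x in Q.toSet, ENNReal.ofReal (Real.exp (c * h x / N)) ∂μ).toReal
      ≤ (12 * μ Q.toSet).toReal := by
        refine ENNReal.toReal_mono ?_ hlint
        exact ENNReal.mul_ne_top (by norm_num) hμQt.ne
    _ = 12 * (μ Q.toSet).toReal := by
        rw [ENNReal.toReal_mul]
        norm_num

end PartE

open DyadicCube in
/-- dyadic martingale John–Nirenberg inequality. -/
theorem dyadic_martingale_john_nirenberg :
    ∃ c C : ℝ, 0 < c ∧ 0 < C ∧
      ∀ (d : ℕ) (μ : Measure (Fin d → ℝ)), IsLocallyFiniteMeasure μ →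
      ∀ (f : (Fin d → ℝ) → ℝ), MeasureTheory.LocallyIntegrable f μ →
        BddAbove {t : ℝ | ∃ Q : DyadicCube d, 0 < μ Q.toSet ∧
          t = (∫ x in Q.toSet, |f x - avg μ f Q.parent.toSet| ∂μ) / (μ Q.toSet).toReal} →
      ∀ (Q : DyadicCube d), 0 < μ Q.toSet → μ Q.toSet < ⊤ →
        ∫ x in Q.toSet,
            Real.exp (c * |f x - avg μ f Q.parent.toSet| / bmoNorm μ f) ∂μ ≤
          C * (μ Q.toSet).toReal := by
  refine ⟨Real.log 2 / 6, 12, by positivity, by norm_num, ?_⟩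
  intro d μ hμ f hf hBdd Q hQpos hQtop
  haveI := hμ
  set c : ℝ := Real.log 2 / 6 with hc
  set N : ℝ := bmoNorm μ f with hNdef
  have hmemQ : (∫ x in Q.toSet, |f x - avg μ f Q.parent.toSet| ∂μ) / (μ Q.toSet).toReal ∈
      {t : ℝ | ∃ Q : DyadicCube d, 0 < μ Q.toSet ∧
        t = (∫ x in Q.toSet, |f x - avg μ f Q.parent.toSet| ∂μ) / (μ Q.toSet).toReal} :=
    ⟨Q, hQpos, rfl⟩
  have hN0 : 0 ≤ N := by
    refine le_trans ?_ (le_csSup hBdd hmemQ)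
    exact div_nonneg (integral_nonneg fun x => abs_nonneg _) ENNReal.toReal_nonneg
  have hNprop : ∀ R : DyadicCube d, 0 < μ R.toSet →
      (∫ x in R.toSet, |f x - avg μ f R.parent.toSet| ∂μ) ≤ N * (μ R.toSet).toReal := by
    intro R hR
    have h1 : (∫ x in R.toSet, |f x - avg μ f R.parent.toSet| ∂μ) / (μ R.toSet).toReal ≤ N :=
      le_csSup hBdd ⟨R, hR, rfl⟩
    have hto : 0 < (μ R.toSet).toReal :=
      ENNReal.toReal_pos hR.ne' (measure_toSet_lt_top μ R).ne
    calc (∫ x in R.toSet, |f x - avg μ f R.parent.toSet| ∂μ)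
        = ((∫ x in R.toSet, |f x - avg μ f R.parent.toSet| ∂μ) / (μ R.toSet).toReal) *
          (μ R.toSet).toReal := (div_mul_cancel₀ _ hto.ne').symm
      _ ≤ N * (μ R.toSet).toReal := mul_le_mul_of_nonneg_right h1 hto.le
  -- helper for the trivial cases: integrand identically 1
  have htriv : ∀ (hone : ∀ x, Real.exp (c * |f x - avg μ f Q.parent.toSet| / N) = 1),
      (∫ x in Q.toSet, Real.exp (c * |f x - avg μ f Q.parent.toSet| / N) ∂μ) ≤
        12 * (μ Q.toSet).toReal := by
    intro hone
    have : (∫ x in Q.toSet, Real.exp (c * |f x - avg μ f Q.parent.toSet| / N) ∂μ) =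
        ∫ _ in Q.toSet, (1:ℝ) ∂μ :=
      integral_congr_ae (Filter.Eventually.of_forall fun x => hone x)
    rw [this, setIntegral_const, smul_eq_mul, mul_one, measureReal_def]
    have := ENNReal.toReal_nonneg (a := μ Q.toSet)
    linarith
  rcases Nat.eq_zero_or_pos d with rfl | hd
  · -- d = 0 : the space is a single point, f is constant
    refine htriv fun x => ?_
    have hP : 0 < μ Q.parent.toSet :=
      hQpos.trans_le (measure_mono (subset_parent Q))
    have hPt : μ Q.parent.toSet < ⊤ := measure_toSet_lt_top μ Q.parent
    have hPto : 0 < (μ Q.parent.toSet).toReal := ENNReal.toReal_pos hP.ne' hPt.ne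
    have hconst : ∀ y, f y = f x := fun y => congrArg f (Subsingleton.elim y x)
    have havg : avg μ f Q.parent.toSet = f x := by
      show (∫ y in Q.parent.toSet, f y ∂μ) / (μ Q.parent.toSet).toReal = f x
      rw [show (∫ y in Q.parent.toSet, f y ∂μ) = ∫ _ in Q.parent.toSet, f x ∂μ from
        integral_congr_ae (Filter.Eventually.of_forall fun y => hconst y)]
      rw [setIntegral_const, smul_eq_mul, measureReal_def, mul_comm, mul_div_assoc, div_self hPto.ne', mul_one]
    rw [havg, sub_self, abs_zero, mul_zero, zero_div, Real.exp_zero]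
  · rcases eq_or_lt_of_le hN0 with hN0' | hNpos
    · -- N = 0 : division by zero makes the integrand 1
      refine htriv fun x => ?_
      rw [← hN0', _root_.div_zero, Real.exp_zero]
    · -- main case
      set g : (Fin d → ℝ) → ℝ := hf.aestronglyMeasurable.mk f with hg
      have hsg : StronglyMeasurable g := hf.aestronglyMeasurable.stronglyMeasurable_mk
      have hfg : f =ᵐ[μ] g := hf.aestronglyMeasurable.ae_eq_mk
      have hgli : LocallyIntegrable g μ := by
        intro x
        obtain ⟨s, hs, hint⟩ := hf x
        exact ⟨s, hs, hint.congr (ae_restrict_of_ae hfg)⟩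
      have havg : ∀ P : Set (Fin d → ℝ), avg μ f P = avg μ g P := by
        intro P
        show (∫ x in P, f x ∂μ) / (μ P).toReal = (∫ x in P, g x ∂μ) / (μ P).toReal
        rw [integral_congr_ae (ae_restrict_of_ae hfg)]
      have hintg : ∀ (P : Set (Fin d → ℝ)) (b : ℝ),
          (∫ x in P, |f x - b| ∂μ) = ∫ x in P, |g x - b| ∂μ := by
        intro P b
        refine integral_congr_ae (ae_restrict_of_ae (hfg.mono fun x hx => ?_))
        simp only [hx]
      have hNg : ∀ R : DyadicCube d, 0 < μ R.toSet →
          (∫ x in R.toSet, |g x - avg μ g R.parent.toSet| ∂μ) ≤ N * (μ R.toSet).toReal := by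
        intro R hR
        rw [← havg, ← hintg]
        exact hNprop R hR
      have hmaster := jn_master hd μ g hsg hgli N hNpos hNg Q hQpos
      rw [havg Q.parent.toSet]
      rw [show (∫ x in Q.toSet, Real.exp (c * |f x - avg μ g Q.parent.toSet| / N) ∂μ) =
          ∫ x in Q.toSet, Real.exp (c * |g x - avg μ g Q.parent.toSet| / N) ∂μ from
        integral_congr_ae (ae_restrict_of_ae (hfg.mono fun x hx => by simp only [hx]))]
      exact hmaster
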